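/- Let E be a finite-dimensional real inner product space, X ⊆ E, and x ∈ X. Then x is apocalyptic — i.e., there exist a sequence (x_k) in X converging to x and a continuously differentiable f : E → ℝ with s(−∇f(x_k), T_{x_k}X) → 0 and s(−∇f(x), T_xX) > 0 — if and only if there exists a sequence (x_k) in X converging to x such that T_xX is not contained in the closure of the convex hull of limsup_k T_{x_k}X. -/

import Mathlib

open Filter Topology

/-- The Bouligand tangent cone of `X ⊆ E` at `x`. -/
def bTangentCone {E : Type*} [NormedAddCommGroup E] [NormedSpace ℝ E]
    (X : Set E) (x : E) : Set E :=
  {v | ∃ (xk : ℕ → E) (τ : ℕ → ℝ), (∀ k, xk k ∈ X) ∧ (∀ k, 0 < τ k) ∧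
    Tendsto τ atTop (𝓝 0) ∧ Tendsto (fun k => (τ k)⁻¹ • (xk k - x)) atTop (𝓝 v)}

/-- The polar of a set `K ⊆ E`: `K° = {w : ⟪w, z⟫ ≤ 0 for all z ∈ K}`. -/
def polarCone {E : Type*} [NormedAddCommGroup E] [InnerProductSpace ℝ E] (K : Set E) : Set E :=
  {w | ∀ z ∈ K, (inner ℝ w z : ℝ) ≤ 0}

/-- The stationarity measure `s(v, K) = max(0, sup{⟪v, z⟫ : z ∈ K, ‖z‖ = 1})`; note that on `ℝ`,
Lean's `sSup` of the empty set is `0`, matching the convention `sup ∅ = 0`. -/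
noncomputable def statMeasure {E : Type*} [NormedAddCommGroup E] [InnerProductSpace ℝ E]
    (v : E) (K : Set E) : ℝ :=
  max 0 (sSup {t : ℝ | ∃ z ∈ K, ‖z‖ = 1 ∧ (inner ℝ v z : ℝ) = t})

/-- The outer limit `limsup_k S_k`: points `u` for which there are a strictly increasing sequence
of indices `(k_i)` and points `u_i ∈ S_{k_i}` with `u_i → u`. -/
def outerLimit {E : Type*} [NormedAddCommGroup E] (S : ℕ → Set E) : Set E :=
  {u | ∃ φ : ℕ → ℕ, StrictMono φ ∧
    ∃ uk : ℕ → E, (∀ i, uk i ∈ S (φ i)) ∧ Tendsto uk atTop (𝓝 u)}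

section helpers

variable {E : Type*} [NormedAddCommGroup E] [InnerProductSpace ℝ E]

lemma zero_mem_bTC (X : Set E) {x : E} (hx : x ∈ X) : (0:E) ∈ bTangentCone X x := by
  refine ⟨fun _ => x, fun k => ((k:ℝ)+1)⁻¹, fun _ => hx, fun k => by positivity, ?_, ?_⟩
  · simpa [one_div] using tendsto_one_div_add_atTop_nhds_zero_nat (𝕜 := ℝ)
  · simpa using (tendsto_const_nhds : Tendsto (fun _ : ℕ => (0:E)) atTop (𝓝 0))

lemma smul_mem_bTC {X : Set E} {x v : E} {r : ℝ} (hr : 0 < r) (hv : v ∈ bTangentCone X x) :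
    r • v ∈ bTangentCone X x := by
  obtain ⟨xk, τ, hX, hτ, hτ0, hlim⟩ := hv
  refine ⟨xk, fun k => τ k / r, hX, fun k => div_pos (hτ k) hr, ?_, ?_⟩
  · simpa using hτ0.div_const r
  · have h : ∀ k, (τ k / r)⁻¹ • (xk k - x) = r • ((τ k)⁻¹ • (xk k - x)) := by
      intro k
      rw [inv_div, div_eq_mul_inv, mul_smul]
    simpa only [h] using hlim.const_smul r

lemma bddAbove_statSet (v : E) (K : Set E) :
    BddAbove {t : ℝ | ∃ z ∈ K, ‖z‖ = 1 ∧ (inner ℝ v z : ℝ) = t} := by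
  refine ⟨‖v‖, ?_⟩
  rintro t ⟨z, hz, hz1, rfl⟩
  calc (inner ℝ v z : ℝ) ≤ ‖v‖ * ‖z‖ := real_inner_le_norm v z
  _ = ‖v‖ := by rw [hz1, mul_one]

lemma statMeasure_nonneg (v : E) (K : Set E) : 0 ≤ statMeasure v K := le_max_left _ _

lemma inner_le_statMeasure {v z : E} {K : Set E} (hz : z ∈ K) (h1 : ‖z‖ = 1) :
    (inner ℝ v z : ℝ) ≤ statMeasure v K :=
  le_trans (le_csSup (bddAbove_statSet v K) ⟨z, hz, h1, rfl⟩) (le_max_right _ _)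

lemma exists_of_lt_statMeasure {v : E} {K : Set E} {a : ℝ} (ha : 0 ≤ a)
    (h : a < statMeasure v K) : ∃ z ∈ K, ‖z‖ = 1 ∧ a < (inner ℝ v z : ℝ) := by
  have hs : a < sSup {t : ℝ | ∃ z ∈ K, ‖z‖ = 1 ∧ (inner ℝ v z : ℝ) = t} := by
    rcases lt_max_iff.1 h with h' | h'
    · linarith
    · exact h'
  have hne : {t : ℝ | ∃ z ∈ K, ‖z‖ = 1 ∧ (inner ℝ v z : ℝ) = t}.Nonempty := by
    by_contra hne
    rw [Set.not_nonempty_iff_eq_empty] at hne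
    rw [hne, Real.sSup_empty] at hs
    linarith
  obtain ⟨t, ⟨z, hz, hz1, rfl⟩, ht⟩ := exists_lt_of_lt_csSup hne hs
  exact ⟨z, hz, hz1, ht⟩

lemma inner_le_statMeasure_mul {X : Set E} {x v u : E} (hu : u ∈ bTangentCone X x) :
    (inner ℝ v u : ℝ) ≤ statMeasure v (bTangentCone X x) * ‖u‖ := by
  rcases eq_or_ne u 0 with rfl | h
  · simp
  · have hn : (0:ℝ) < ‖u‖ := norm_pos_iff.2 h
    have hr : (0:ℝ) < ‖u‖⁻¹ := by positivity
    have hz := smul_mem_bTC hr hu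
    have h1 : ‖‖u‖⁻¹ • u‖ = 1 := by
      rw [norm_smul, norm_inv, norm_norm, inv_mul_cancel₀ hn.ne']
    have h2 := inner_le_statMeasure (v := v) hz h1
    rw [real_inner_smul_right] at h2
    calc (inner ℝ v u : ℝ) = ‖u‖ * (‖u‖⁻¹ * (inner ℝ v u : ℝ)) := by field_simp
    _ ≤ ‖u‖ * statMeasure v (bTangentCone X x) := by
        exact mul_le_mul_of_nonneg_left h2 hn.le
    _ = statMeasure v (bTangentCone X x) * ‖u‖ := mul_comm _ _

lemma outerLimit_smul {S : ℕ → Set E}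
    (hS : ∀ k, ∀ u ∈ S k, ∀ r : ℝ, 0 < r → r • u ∈ S k)
    {u : E} (hu : u ∈ outerLimit S) {r : ℝ} (hr : 0 < r) : r • u ∈ outerLimit S := by
  obtain ⟨φ, hφ, uk, hk, hlim⟩ := hu
  exact ⟨φ, hφ, fun i => r • uk i, fun i => hS _ _ (hk i) r hr, hlim.const_smul r⟩

lemma convexHull_cone {s : Set E} (hs : ∀ u ∈ s, ∀ r : ℝ, 0 < r → r • u ∈ s) :
    ∀ u ∈ convexHull ℝ s, ∀ r : ℝ, 0 < r → r • u ∈ convexHull ℝ s := by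
  intro u hu r hr
  have h : convexHull ℝ s ⊆ (fun y => r • y) ⁻¹' (convexHull ℝ s) := by
    apply convexHull_min
    · intro y hy
      exact subset_convexHull ℝ s (hs y hy r hr)
    · exact (convex_convexHull ℝ s).is_linear_preimage (IsLinearMap.isLinearMap_smul r)
  exact h hu

lemma closure_cone {s : Set E} (hs : ∀ u ∈ s, ∀ r : ℝ, 0 < r → r • u ∈ s) :
    ∀ u ∈ closure s, ∀ r : ℝ, 0 < r → r • u ∈ closure s := by
  intro u hu r hr
  have h1 : r • u ∈ (fun y : E => r • y) '' closure s := ⟨u, hu, rfl⟩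
  have h2 := image_closure_subset_closure_image (continuous_const_smul r) h1
  refine closure_mono ?_ h2
  rintro _ ⟨y, hy, rfl⟩
  exact hs y hy r hr

lemma sep_cone [FiniteDimensional ℝ E] {C : Set E} (hconv : Convex ℝ C) (hclosed : IsClosed C)
    (hcone : ∀ c ∈ C, ∀ r : ℝ, 0 < r → r • c ∈ C) (h0 : (0:E) ∈ C)
    {w : E} (hw : w ∉ C) :
    ∃ v : E, (∀ c ∈ C, (inner ℝ v c : ℝ) ≤ 0) ∧ 0 < (inner ℝ v w : ℝ) := by
  obtain ⟨f, u, hfC, hfw⟩ := geometric_hahn_banach_closed_point hconv hclosed hw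
  set v := (InnerProductSpace.toDual ℝ E).symm f with hv
  have hvy : ∀ y : E, (inner ℝ v y : ℝ) = f y := fun y => InnerProductSpace.toDual_symm_apply
  have hu : 0 < u := by have := hfC 0 h0; simpa using this
  refine ⟨v, ?_, ?_⟩
  · intro c hc
    rw [hvy]
    by_contra hpos
    push_neg at hpos
    have hfc : 0 < f c := hpos
    have hrc : (0:ℝ) < (u + 1) / f c := by positivity
    have hmem := hcone c hc _ hrc
    have := hfC _ hmem
    rw [map_smul] at this
    have : (u + 1) / f c * f c < u := this
    rw [div_mul_cancel₀ _ hfc.ne'] at this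
    linarith
  · rw [hvy]; linarith

lemma not_tendsto_subseq {s : ℕ → ℝ} (h0 : ∀ k, 0 ≤ s k)
    (h : ¬ Tendsto s atTop (𝓝 0)) :
    ∃ ε > 0, ∃ φ : ℕ → ℕ, StrictMono φ ∧ ∀ i, ε ≤ s (φ i) := by
  rw [Metric.tendsto_atTop] at h
  push_neg at h
  obtain ⟨ε, hε, hfreq⟩ := h
  refine ⟨ε, hε, ?_⟩
  have hf : ∃ᶠ k in atTop, ε ≤ s k := by
    rw [frequently_atTop]
    intro N
    obtain ⟨k, hk, hd⟩ := hfreq N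
    refine ⟨k, hk, ?_⟩
    rw [Real.dist_eq, sub_zero, abs_of_nonneg (h0 k)] at hd
    linarith
  exact Filter.extraction_of_frequently_atTop hf

end helpers

/-- Let `E` be a finite-dimensional real inner product space, `X ⊆ E`, `x ∈ X`.
Then `x` is apocalyptic — i.e. there exist a sequence `(x_k)` in `X` converging to `x` and a
continuously differentiable `f : E → ℝ` with `s(−∇f(x_k), T_{x_k}X) → 0` and
`s(−∇f(x), T_xX) > 0` — if and only if there exists a sequence `(x_k)` in `X` converging to `x`
such that `T_xX` is not contained in the closure of the convex hull of `limsup_k T_{x_k}X`. -/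
theorem stmt10 {E : Type*} [NormedAddCommGroup E] [InnerProductSpace ℝ E] [FiniteDimensional ℝ E]
    (X : Set E) (x : E) (hx : x ∈ X) :
    (∃ (xk : ℕ → E) (f : E → ℝ), (∀ k, xk k ∈ X) ∧ Tendsto xk atTop (𝓝 x) ∧
      ContDiff ℝ 1 f ∧
      Tendsto (fun k => statMeasure (-gradient f (xk k)) (bTangentCone X (xk k))) atTop (𝓝 0) ∧
      0 < statMeasure (-gradient f x) (bTangentCone X x)) ↔
    (∃ xk : ℕ → E, (∀ k, xk k ∈ X) ∧ Tendsto xk atTop (𝓝 x) ∧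
      ¬ bTangentCone X x ⊆
          closure (convexHull ℝ (outerLimit fun k => bTangentCone X (xk k)))) := by
  constructor
  · rintro ⟨xk, f, hmem, htend, hC1, hstat, hpos⟩
    refine ⟨xk, hmem, htend, ?_⟩
    intro hsub
    set v := -gradient f x with hv
    obtain ⟨z, hzT, hz1, hzpos⟩ := exists_of_lt_statMeasure le_rfl hpos
    have hzC := hsub hzT
    have hgc : Continuous (fun y => gradient f y) := by
      have hfd : Continuous (fun y => fderiv ℝ f y) := hC1.continuous_fderiv one_ne_zero
      exact (InnerProductSpace.toDual ℝ E).symm.continuous.comp hfd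
    have key : ∀ u ∈ outerLimit (fun k => bTangentCone X (xk k)), (inner ℝ v u : ℝ) ≤ 0 := by
      rintro u ⟨φ, hφ, uk, huk, hulim⟩
      have h1 : ∀ i, (inner ℝ v (uk i) : ℝ) ≤
          statMeasure (-gradient f (xk (φ i))) (bTangentCone X (xk (φ i))) * ‖uk i‖
            + (inner ℝ (v - -gradient f (xk (φ i))) (uk i) : ℝ) := by
        intro i
        have h2 := inner_le_statMeasure_mul (v := -gradient f (xk (φ i))) (huk i)
        have h3 : (inner ℝ v (uk i) : ℝ) - (inner ℝ (-gradient f (xk (φ i))) (uk i) : ℝ)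
            = (inner ℝ (v - -gradient f (xk (φ i))) (uk i) : ℝ) :=
          (inner_sub_left _ _ _).symm
        linarith
      have hlimL : Tendsto (fun i => (inner ℝ v (uk i) : ℝ)) atTop (𝓝 (inner ℝ v u : ℝ)) :=
        tendsto_const_nhds.inner hulim
      have hgl : Tendsto (fun i => -gradient f (xk (φ i))) atTop (𝓝 v) := by
        rw [hv]
        exact (((hgc.tendsto x).comp (htend.comp hφ.tendsto_atTop))).neg
      have hsl : Tendsto
          (fun i => statMeasure (-gradient f (xk (φ i))) (bTangentCone X (xk (φ i))))
          atTop (𝓝 0) := hstat.comp hφ.tendsto_atTop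
      have hlimR : Tendsto (fun i =>
          statMeasure (-gradient f (xk (φ i))) (bTangentCone X (xk (φ i))) * ‖uk i‖
            + (inner ℝ (v - -gradient f (xk (φ i))) (uk i) : ℝ)) atTop (𝓝 0) := by
        have hA : Tendsto (fun i =>
            statMeasure (-gradient f (xk (φ i))) (bTangentCone X (xk (φ i))) * ‖uk i‖)
            atTop (𝓝 (0 * ‖u‖)) := hsl.mul hulim.norm
        have hB : Tendsto (fun i => (inner ℝ (v - -gradient f (xk (φ i))) (uk i) : ℝ))
            atTop (𝓝 (inner ℝ (v - v) u : ℝ)) :=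
          (tendsto_const_nhds.sub hgl).inner hulim
        have : (0 : ℝ) = 0 * ‖u‖ + (inner ℝ (v - v : E) u : ℝ) := by simp
        rw [this]
        exact hA.add hB
      have := le_of_tendsto_of_tendsto' hlimL hlimR h1
      exact this
    have hconvset : Convex ℝ {u : E | (inner ℝ v u : ℝ) ≤ 0} := by
      refine convex_halfSpace_le ⟨fun a b => inner_add_right v a b, fun c a => ?_⟩ 0
      exact real_inner_smul_right v a c
    have hclosedset : IsClosed {u : E | (inner ℝ v u : ℝ) ≤ 0} :=
      isClosed_le (continuous_const.inner continuous_id) continuous_const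
    have hhs : closure (convexHull ℝ (outerLimit fun k => bTangentCone X (xk k)))
        ⊆ {u : E | (inner ℝ v u : ℝ) ≤ 0} := by
      apply closure_minimal ?_ hclosedset
      exact convexHull_min key hconvset
    exact absurd (hhs hzC) (not_le.2 hzpos)
  · rintro ⟨xk, hmem, htend, hnsub⟩
    obtain ⟨w, hwT, hwC⟩ := Set.not_subset.1 hnsub
    set C := closure (convexHull ℝ (outerLimit fun k => bTangentCone X (xk k))) with hC
    have hcone : ∀ c ∈ C, ∀ r : ℝ, 0 < r → r • c ∈ C :=
      closure_cone (convexHull_cone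
        (fun u hu r hr => outerLimit_smul (fun k u hu r hr => smul_mem_bTC hr hu) hu hr))
    have h0 : (0:E) ∈ C :=
      subset_closure (subset_convexHull ℝ _
        ⟨id, strictMono_id, fun _ => 0, fun i => zero_mem_bTC X (hmem i), tendsto_const_nhds⟩)
    obtain ⟨v, hvC, hvw⟩ :=
      sep_cone ((convex_convexHull ℝ _).closure) isClosed_closure hcone h0 hwC
    have hgrad : ∀ y : E, gradient (fun y => -(inner ℝ v y : ℝ)) y = -v := by
      intro y
      apply HasGradientAt.gradient
      rw [hasGradientAt_iff_hasFDerivAt]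
      have hdual : InnerProductSpace.toDual ℝ E (-v) = -(innerSL ℝ v) := by
        ext z
        simp [InnerProductSpace.toDual_apply_apply, inner_neg_left]
      rw [hdual]
      exact ((innerSL ℝ v).hasFDerivAt (x := y)).neg
    refine ⟨xk, fun y => -(inner ℝ v y : ℝ), hmem, htend, ?_, ?_, ?_⟩
    · exact ((innerSL ℝ v).contDiff).neg
    · simp only [hgrad, neg_neg]
      by_contra hne
      obtain ⟨ε, hε, φ, hφ, hge⟩ :=
        not_tendsto_subseq (fun k => statMeasure_nonneg v (bTangentCone X (xk k))) hne
      have hex : ∀ i, ∃ z ∈ bTangentCone X (xk (φ i)), ‖z‖ = 1 ∧ ε / 2 < (inner ℝ v z : ℝ) := by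
        intro i
        exact exists_of_lt_statMeasure (by positivity) (lt_of_lt_of_le (by linarith) (hge i))
      choose z hzT hz1 hzi using hex
      have hsph : ∀ i, z i ∈ Metric.sphere (0:E) 1 := by
        intro i
        rw [mem_sphere_zero_iff_norm]
        exact hz1 i
      obtain ⟨zlim, hzlim, ψ, hψ, hzlim⟩ := (isCompact_sphere (0:E) 1).tendsto_subseq hsph
      have hmemOL : zlim ∈ outerLimit (fun k => bTangentCone X (xk k)) :=
        ⟨φ ∘ ψ, hφ.comp hψ, fun j => z (ψ j), fun j => hzT (ψ j), hzlim⟩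
      have hle := hvC zlim (subset_closure (subset_convexHull ℝ _ hmemOL))
      have hlim2 : Tendsto (fun j => (inner ℝ v (z (ψ j)) : ℝ)) atTop (𝓝 (inner ℝ v zlim : ℝ)) :=
        tendsto_const_nhds.inner hzlim
      have hge2 : ε / 2 ≤ (inner ℝ v zlim : ℝ) :=
        le_of_tendsto_of_tendsto' tendsto_const_nhds hlim2 (fun j => (hzi (ψ j)).le)
      linarith
    · simp only [hgrad, neg_neg]
      have hw0 : w ≠ 0 := fun h => hwC (h ▸ h0)
      have hn : (0:ℝ) < ‖w‖ := norm_pos_iff.2 hw0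
      have hr : (0:ℝ) < ‖w‖⁻¹ := by positivity
      have hzT := smul_mem_bTC hr hwT
      have h1 : ‖‖w‖⁻¹ • w‖ = 1 := by
        rw [norm_smul, norm_inv, norm_norm, inv_mul_cancel₀ hn.ne']
      have h2 : (0:ℝ) < (inner ℝ v (‖w‖⁻¹ • w) : ℝ) := by
        rw [real_inner_smul_right]
        positivity
      exact lt_of_lt_of_le h2 (inner_le_statMeasure hzT h1)
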